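/- Let f ∈ F₁(a,b), let Q, P be probability measures on (Ω,M), and let K be a Markov probability kernel from (Ω,M) to a measurable space (N,N'). Then: (1) for any nonempty Γ ⊂ M_b(N), D_f^Γ(K[Q] ‖ K[P]) ≤ D_f^{K[Γ]}(Q‖P), where K[Q](B) = ∫ K_x(B) Q(dx) and K[Γ] = {x ↦ ∫ g(y) K_x(dy) : g ∈ Γ}; and (2) for any nonempty Γ ⊂ M_b(Ω×N), D_f^Γ(Q⊗K ‖ P⊗K) ≤ D_f^{K[Γ]}(Q‖P), where Q⊗K is the measure on Ω×N given by (Q⊗K)(A×B) = ∫_A K_x(B) Q(dx) and K[g](x) = ∫ g(x,y) K_x(dy) for g ∈ Γ. -/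

import Mathlib

open MeasureTheory Filter Set Topology ENNReal
open scoped Classical

noncomputable section

/-- The set of bounded measurable real-valued functions on `Ω`. -/
def Mb (Ω : Type*) [MeasurableSpace Ω] : Set (Ω → ℝ) :=
  {g | Measurable g ∧ ∃ C : ℝ, ∀ x, |g x| ≤ C}

/-- The set of bounded continuous real-valued functions on `S`. -/
def Cb (S : Type*) [TopologicalSpace S] : Set (S → ℝ) :=
  {g | Continuous g ∧ ∃ C : ℝ, ∀ x, |g x| ≤ C}

/-- The positive part of an extended real number, as an element of `ℝ≥0∞`. -/
def posE (x : EReal) : ℝ≥0∞ := if x = ⊤ then ⊤ else ENNReal.ofReal x.toReal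

/-- The extended-real-valued integral of an `EReal`-valued function, defined as the
difference of the lower integrals of the positive and negative parts, with the
convention `∞ - ∞ = -∞`. -/
def eIntegral {Ω : Type*} [MeasurableSpace Ω] (P : Measure Ω) (h : Ω → EReal) : EReal :=
  ((∫⁻ x, posE (h x) ∂P : ℝ≥0∞) : EReal) - ((∫⁻ x, posE (-(h x)) ∂P : ℝ≥0∞) : EReal)

/-- The Legendre transform `f*(y) = sup_x {x*y - f(x)}` of `f : ℝ → (-∞,∞]`. -/
def fstar (f : ℝ → EReal) (y : ℝ) : EReal := ⨆ x : ℝ, (((x * y : ℝ) : EReal) - f x)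

/-- `f : ℝ → (-∞,∞]` is (the convex LSC extension of) an element of `F₁(a,b)`:
convex, lower semicontinuous, never `-∞`, finite exactly on the interval `(a,b)`
(with `+∞` strictly outside `[a,b]`), and `f(1) = 0` with `a < 1 < b`. -/
structure IsF1 (a b : EReal) (f : ℝ → EReal) : Prop where
  a_lt_one : a < ((1 : ℝ) : EReal)
  one_lt_b : ((1 : ℝ) : EReal) < b
  convex : ∀ x y t : ℝ, 0 < t → t < 1 →
    f (t * x + (1 - t) * y) ≤ ((t : ℝ) : EReal) * f x + (((1 - t : ℝ)) : EReal) * f y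
  lsc : LowerSemicontinuous f
  ne_bot : ∀ x, f x ≠ ⊥
  finite_on : ∀ x : ℝ, a < (x : EReal) → (x : EReal) < b → f x ≠ ⊤
  top_outside : ∀ x : ℝ, ((x : EReal) < a ∨ b < (x : EReal)) → f x = ⊤
  at_one : f 1 = 0

/-- `Λ_f^P[g] = inf_{ν ∈ ℝ} {ν + E_P[f*(g - ν)]}`. -/
def LambdaF {Ω : Type*} [MeasurableSpace Ω] (f : ℝ → EReal) (P : Measure Ω) (g : Ω → ℝ) :
    EReal :=
  ⨅ ν : ℝ, ((ν : EReal) + eIntegral P (fun x => fstar f (g x - ν)))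

/-- The classical `f`-divergence `D_f(Q‖P) = E_P[f(dQ/dP)]` if `Q ≪ P`, else `∞`. -/
def fDivE {Ω : Type*} [MeasurableSpace Ω] (f : ℝ → EReal) (Q P : Measure Ω) : EReal :=
  if Q ≪ P then eIntegral P (fun x => f ((Q.rnDeriv P x).toReal)) else ⊤

/-- The `(f,Γ)`-divergence `D_f^Γ(Q‖P) = sup_{g ∈ Γ} {E_Q[g] - Λ_f^P[g]}`. -/
def fGammaDiv {Ω : Type*} [MeasurableSpace Ω] (f : ℝ → EReal) (Γ : Set (Ω → ℝ))
    (Q P : Measure Ω) : EReal :=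
  ⨆ g ∈ Γ, (((∫ x, g x ∂Q : ℝ) : EReal) - LambdaF f P g)

/-- The `Γ`-IPM `W^Γ(Q,P) = sup_{g ∈ Γ} {E_Q[g] - E_P[g]}`. -/
def ipmW {Ω : Type*} [MeasurableSpace Ω] (Γ : Set (Ω → ℝ)) (Q P : Measure Ω) : EReal :=
  ⨆ g ∈ Γ, (((∫ x, g x ∂Q : ℝ) : EReal) - ((∫ x, g x ∂P : ℝ) : EReal))

end

section Helpers
open MeasureTheory Filter Set Topology ENNReal
lemma posE_coe (r : ℝ) : posE r = ENNReal.ofReal r := by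
  simp [posE, EReal.coe_ne_top]

lemma posE_mono : Monotone posE := by
  intro x y hxy
  by_cases hy : y = ⊤
  · simp [posE, hy]
  · have hx : x ≠ ⊤ := fun h => hy (top_le_iff.mp (h ▸ hxy))
    simp only [posE, if_neg hx, if_neg hy]
    by_cases hx' : x = ⊥
    · simp [hx']
    · exact ENNReal.ofReal_le_ofReal (EReal.toReal_le_toReal hxy hx' hy)

lemma posE_coe_ennreal (c : ℝ≥0∞) : posE c = c := by
  by_cases hc : c = ⊤
  · simp [posE, hc]
  · rw [posE, if_neg (by simp [hc]), EReal.toReal_coe_ennreal,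
      ENNReal.ofReal_toReal hc]

lemma posE_measurable : Measurable posE := by
  apply EReal.measurable_of_measurable_real
  simpa [posE_coe] using ENNReal.measurable_ofReal.comp measurable_id

lemma ereal_coe_ennreal_eq (a : ℝ≥0∞) (ha : a ≠ ⊤) :
    (a : EReal) = ((a.toReal : ℝ) : EReal) := by
  rw [← EReal.coe_toReal (x := (a : EReal)) (by simp [ha]) (by simp),
    EReal.toReal_coe_ennreal]

lemma posE_sub_coe (a b : ℝ≥0∞) (hb : b ≠ ⊤) :
    posE ((a : EReal) - (b : EReal)) = a - b := by
  by_cases ha : a = ⊤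
  · subst ha
    rw [ereal_coe_ennreal_eq b hb]
    simp [EReal.coe_ennreal_top, EReal.top_sub_coe, posE, ENNReal.top_sub hb]
  · rw [ereal_coe_ennreal_eq a ha, ereal_coe_ennreal_eq b hb, ← EReal.coe_sub, posE_coe,
      ← ENNReal.ofReal_toReal ha, ← ENNReal.ofReal_toReal hb, ← ENNReal.ofReal_sub _ toReal_nonneg]
    simp [ENNReal.toReal_ofReal toReal_nonneg]

lemma posE_neg_sub_coe (a b : ℝ≥0∞) (hb : b ≠ ⊤) :
    posE (-((a : EReal) - (b : EReal))) = b - a := by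
  by_cases ha : a = ⊤
  · subst ha
    rw [ereal_coe_ennreal_eq b hb]
    simp [EReal.coe_ennreal_top, EReal.top_sub_coe, posE, tsub_eq_zero_of_le le_top]
  · rw [ereal_coe_ennreal_eq a ha, ereal_coe_ennreal_eq b hb, ← EReal.coe_sub, ← EReal.coe_neg,
      posE_coe, neg_sub, ← ENNReal.ofReal_toReal ha, ← ENNReal.ofReal_toReal hb,
      ← ENNReal.ofReal_sub _ toReal_nonneg]
    simp [ENNReal.toReal_ofReal toReal_nonneg]

lemma eIntegral_mono {Ω : Type*} [MeasurableSpace Ω] (P : Measure Ω) {h1 h2 : Ω → EReal}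
    (h : ∀ x, h1 x ≤ h2 x) : eIntegral P h1 ≤ eIntegral P h2 := by
  refine EReal.sub_le_sub ?_ ?_
  · exact EReal.coe_ennreal_le_coe_ennreal_iff.mpr
      (lintegral_mono fun x => posE_mono (h x))
  · exact EReal.coe_ennreal_le_coe_ennreal_iff.mpr
      (lintegral_mono fun x => posE_mono (EReal.neg_le_neg_iff.mpr (h x)))

lemma eIntegral_coe {Ω : Type*} [MeasurableSpace Ω] {P : Measure Ω} {φ : Ω → ℝ}
    (hφ : Integrable φ P) :
    eIntegral P (fun x => ((φ x : ℝ) : EReal)) = ((∫ x, φ x ∂P : ℝ) : EReal) := by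
  have h1 : ∀ x, posE ((φ x : ℝ) : EReal) = ENNReal.ofReal (φ x) := fun x => posE_coe _
  have h2 : ∀ x, posE (-((φ x : ℝ) : EReal)) = ENNReal.ofReal (-φ x) := by
    intro x; rw [← EReal.coe_neg, posE_coe]
  have hfin1 : (∫⁻ x, ENNReal.ofReal (φ x) ∂P) ≠ ⊤ := by
    refine ne_of_lt (lt_of_le_of_lt (lintegral_mono fun x => ?_) hφ.2)
    rw [← ofReal_norm_eq_enorm]
    exact ENNReal.ofReal_le_ofReal (le_abs_self _)
  have hfin2 : (∫⁻ x, ENNReal.ofReal (-φ x) ∂P) ≠ ⊤ := by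
    refine ne_of_lt (lt_of_le_of_lt (lintegral_mono fun x => ?_) hφ.2)
    rw [← ofReal_norm_eq_enorm]
    exact ENNReal.ofReal_le_ofReal (neg_le_abs _)
  rw [eIntegral]
  simp only [h1, h2]
  rw [ereal_coe_ennreal_eq _ hfin1, ereal_coe_ennreal_eq _ hfin2, ← EReal.coe_sub,
    integral_eq_lintegral_pos_part_sub_lintegral_neg_part hφ]

lemma key_ineq {Ω : Type*} [MeasurableSpace Ω] (P : Measure Ω) [IsProbabilityMeasure P]
    {A B : Ω → ℝ≥0∞} (hA : Measurable A) (hB : Measurable B) {c : ℝ≥0∞} (hc : c ≠ ⊤)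
    (hBc : ∀ x, B x ≤ c) :
    eIntegral P (fun x => (A x : EReal) - (B x : EReal))
      ≤ ((∫⁻ x, A x ∂P : ℝ≥0∞) : EReal) - ((∫⁻ x, B x ∂P : ℝ≥0∞) : EReal) := by
  have hBx : ∀ x, B x ≠ ⊤ := fun x => ne_of_lt (lt_of_le_of_lt (hBc x) hc.lt_top)
  have hb : (∫⁻ x, B x ∂P) ≠ ⊤ := by
    refine ne_of_lt (lt_of_le_of_lt (lintegral_mono hBc) ?_)
    simpa using hc.lt_top
  rw [eIntegral]
  simp only [posE_sub_coe _ _ (hBx _), posE_neg_sub_coe _ _ (hBx _)]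
  set X := ∫⁻ x, (A x - B x) ∂P with hX
  set Y := ∫⁻ x, (B x - A x) ∂P with hY
  set a := ∫⁻ x, A x ∂P with ha
  set b := ∫⁻ x, B x ∂P with hbdef
  have hXb : X + b = a + Y := by
    rw [hX, hY, ha, hbdef, ← lintegral_add_right _ hB, ← lintegral_add_right _ (show Measurable fun x => B x - A x from hB.sub hA)]
    congr 1
    funext x
    rw [tsub_add_eq_max, add_tsub_eq_max]
  have hXa : X ≤ a := lintegral_mono fun x => tsub_le_self
  by_cases hatop : a = ⊤
  · rw [hatop, ereal_coe_ennreal_eq b hb]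
    simp [EReal.coe_ennreal_top, EReal.top_sub_coe]
  · have hXtop : X ≠ ⊤ := ne_top_of_le_ne_top hatop hXa
    by_cases hYtop : Y = ⊤
    · rw [hYtop]
      simp [EReal.coe_ennreal_top, EReal.sub_top]
    · have : X.toReal + b.toReal = a.toReal + Y.toReal := by
        rw [← ENNReal.toReal_add hXtop hb, ← ENNReal.toReal_add hatop hYtop, hXb]
      rw [ereal_coe_ennreal_eq X hXtop, ereal_coe_ennreal_eq Y hYtop,
        ereal_coe_ennreal_eq a hatop, ereal_coe_ennreal_eq b hb, ← EReal.coe_sub, ← EReal.coe_sub,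
        EReal.coe_le_coe_iff]
      linarith

variable {a b : EReal} {f : ℝ → EReal}

lemma fstar_ge (hf : IsF1 a b f) (y : ℝ) : (y : EReal) ≤ fstar f y := by
  have := le_iSup (fun x : ℝ => (((x * y : ℝ) : EReal) - f x)) 1
  unfold fstar
  simpa [hf.at_one] using this

lemma fstar_measurable (hf : IsF1 a b f) : Measurable (fstar f) := by
  have hlsc : LowerSemicontinuous (fstar f) := by
    apply lowerSemicontinuous_iSup
    intro x
    by_cases hx : f x = ⊤
    · simp only [hx, EReal.sub_top]
      exact lowerSemicontinuous_const
    · have hfx : f x = ((f x).toReal : EReal) := (EReal.coe_toReal hx (hf.ne_bot x)).symm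
      rw [hfx]
      have : (fun y : ℝ => (((x * y : ℝ) : EReal) - ((f x).toReal : EReal)))
          = fun y : ℝ => (((x * y - (f x).toReal : ℝ) : EReal)) := by
        funext y; rw [EReal.coe_sub]
      rw [this]
      exact (EReal.continuous_coe_iff.mpr (by fun_prop)).lowerSemicontinuous
  exact hlsc.measurable

lemma jensen (hf : IsF1 a b f) {α : Type*} [MeasurableSpace α] (μ : Measure α)
    [IsProbabilityMeasure μ] {φ : α → ℝ} (hφ : Integrable φ μ) :
    fstar f (∫ y, φ y ∂μ) ≤ eIntegral μ (fun y => fstar f (φ y)) := by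
  rw [fstar]
  refine iSup_le fun x => ?_
  by_cases hx : f x = ⊤
  · simp [hx, EReal.sub_top]
  · have hfx : f x = ((f x).toReal : EReal) := (EReal.coe_toReal hx (hf.ne_bot x)).symm
    set c := (f x).toReal with hc
    have hint : Integrable (fun y => x * φ y - c) μ := (hφ.const_mul x).sub (integrable_const c)
    have hιnt : (∫ y, (x * φ y - c) ∂μ) = x * (∫ y, φ y ∂μ) - c := by
      rw [integral_sub (hφ.const_mul x) (integrable_const c), integral_const_mul, integral_const]
      simp
    calc ((x * (∫ y, φ y ∂μ) : ℝ) : EReal) - f x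
        = ((x * (∫ y, φ y ∂μ) - c : ℝ) : EReal) := by rw [hfx, EReal.coe_sub]
      _ = eIntegral μ (fun y => ((x * φ y - c : ℝ) : EReal)) := by rw [eIntegral_coe hint, hιnt]
      _ ≤ eIntegral μ (fun y => fstar f (φ y)) := by
          refine eIntegral_mono μ fun y => ?_
          have := le_iSup (fun z : ℝ => (((z * φ y : ℝ) : EReal) - f z)) x
          rw [fstar]
          refine le_trans ?_ this
          rw [hfx, EReal.coe_sub]

lemma integrable_of_bdd {α : Type*} [MeasurableSpace α] {μ : Measure α} [IsFiniteMeasure μ]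
    {g : α → ℝ} (hm : Measurable g) {C : ℝ} (hC : ∀ x, |g x| ≤ C) : Integrable g μ := by
  refine Integrable.mono' (integrable_const C) hm.aestronglyMeasurable (ae_of_all _ fun x => ?_)
  simpa [Real.norm_eq_abs] using hC x

section Kern
open ProbabilityTheory
variable {Ω N : Type*} [MeasurableSpace Ω] [MeasurableSpace N]
  {P : Measure Ω} [IsProbabilityMeasure P]
  {K : Kernel Ω N} [IsMarkovKernel K]

lemma eIntegral_bind_ge {h : N → EReal} (hm : Measurable h) {c : ℝ≥0∞} (hc : c ≠ ⊤)
    (hneg : ∀ y, posE (-(h y)) ≤ c) :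
    eIntegral P (fun x => eIntegral (K x) h) ≤ eIntegral (P.bind (fun x => K x)) h := by
  set A : Ω → ℝ≥0∞ := fun x => ∫⁻ y, posE (h y) ∂(K x) with hA
  set B : Ω → ℝ≥0∞ := fun x => ∫⁻ y, posE (-(h y)) ∂(K x) with hB
  have hAm : Measurable A := (posE_measurable.comp hm).lintegral_kernel
  have hnegm : Measurable fun y => posE (-(h y)) := by
    refine posE_measurable.comp (Measurable.comp ?_ hm)
    exact EReal.measurable_of_measurable_real (by
        simpa using measurable_coe_real_ereal)
  have hBm : Measurable B := hnegm.lintegral_kernel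
  have hBc : ∀ x, B x ≤ c := by
    intro x
    calc B x ≤ ∫⁻ _, c ∂(K x) := lintegral_mono fun y => hneg y
      _ = c := by simp
  calc eIntegral P (fun x => eIntegral (K x) h)
      ≤ ((∫⁻ x, A x ∂P : ℝ≥0∞) : EReal) - ((∫⁻ x, B x ∂P : ℝ≥0∞) : EReal) :=
        key_ineq P hAm hBm hc hBc
    _ = eIntegral (P.bind (fun x => K x)) h := by
        rw [eIntegral, Measure.lintegral_bind K.measurable.aemeasurable
            (show Measurable fun y => posE (h y) from posE_measurable.comp hm).aemeasurable,
          Measure.lintegral_bind K.measurable.aemeasurable hnegm.aemeasurable]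

lemma eIntegral_compProd_ge {h : Ω × N → EReal} (hm : Measurable h) {c : ℝ≥0∞} (hc : c ≠ ⊤)
    (hneg : ∀ z, posE (-(h z)) ≤ c) :
    eIntegral P (fun x => eIntegral (K x) (fun y => h (x, y)))
      ≤ eIntegral (P.compProd K) h := by
  set A : Ω → ℝ≥0∞ := fun x => ∫⁻ y, posE (h (x, y)) ∂(K x) with hA
  set B : Ω → ℝ≥0∞ := fun x => ∫⁻ y, posE (-(h (x, y))) ∂(K x) with hB
  have hnegm : Measurable fun z : Ω × N => posE (-(h z)) := by
    refine posE_measurable.comp (Measurable.comp ?_ hm)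
    exact EReal.measurable_of_measurable_real (by
        simpa using measurable_coe_real_ereal)
  have hAm : Measurable A := (posE_measurable.comp hm).lintegral_kernel_prod_right'
  have hBm : Measurable B := hnegm.lintegral_kernel_prod_right'
  have hBc : ∀ x, B x ≤ c := by
    intro x
    calc B x ≤ ∫⁻ _, c ∂(K x) := lintegral_mono fun y => hneg _
      _ = c := by simp
  calc eIntegral P (fun x => eIntegral (K x) (fun y => h (x, y)))
      ≤ ((∫⁻ x, A x ∂P : ℝ≥0∞) : EReal) - ((∫⁻ x, B x ∂P : ℝ≥0∞) : EReal) :=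
        key_ineq P hAm hBm hc hBc
    _ = eIntegral (P.compProd K) h := by
        rw [eIntegral, Measure.lintegral_compProd
            (show Measurable fun z => posE (h z) from posE_measurable.comp hm),
          Measure.lintegral_compProd hnegm]
end Kern

section Kern2
open ProbabilityTheory
variable {Ω N : Type*} [MeasurableSpace Ω] [MeasurableSpace N]
  {P Q : Measure Ω} [IsProbabilityMeasure P] [IsProbabilityMeasure Q]
  {K : Kernel Ω N} [IsMarkovKernel K]

lemma posE_neg_fstar_le (hf : IsF1 a b f) {t C : ℝ} (ht : |t| ≤ C) :
    posE (-(fstar f t)) ≤ ENNReal.ofReal C := by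
  calc posE (-(fstar f t)) ≤ posE ((-t : ℝ) : EReal) := by
        refine posE_mono ?_
        rw [EReal.coe_neg]
        exact EReal.neg_le_neg_iff.mpr (fstar_ge hf t)
    _ ≤ ENNReal.ofReal C := by
        rw [posE_coe]
        exact ENNReal.ofReal_le_ofReal (le_trans (neg_le_abs t) ht)

lemma lambda_le_bind (hf : IsF1 a b f) {g : N → ℝ} (hgm : Measurable g) {C : ℝ}
    (hgC : ∀ y, |g y| ≤ C) :
    LambdaF f P (fun x => ∫ y, g y ∂(K x)) ≤ LambdaF f (P.bind (fun x => K x)) g := by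
  refine iInf_mono fun ν => add_le_add le_rfl ?_
  have hmeas : Measurable fun y => fstar f (g y - ν) :=
    (fstar_measurable hf).comp (hgm.sub measurable_const)
  calc eIntegral P (fun x => fstar f ((∫ y, g y ∂(K x)) - ν))
      ≤ eIntegral P (fun x => eIntegral (K x) (fun y => fstar f (g y - ν))) := by
        refine eIntegral_mono P fun x => ?_
        have hint : Integrable (fun y => g y - ν) (K x) :=
          (integrable_of_bdd hgm hgC).sub (integrable_const ν)
        have : (∫ y, g y ∂(K x)) - ν = ∫ y, (g y - ν) ∂(K x) := by
          rw [integral_sub (integrable_of_bdd hgm hgC) (integrable_const ν), integral_const]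
          simp
        rw [this]
        exact jensen hf (K x) hint
    _ ≤ eIntegral (P.bind (fun x => K x)) (fun y => fstar f (g y - ν)) := by
        refine eIntegral_bind_ge hmeas (c := ENNReal.ofReal (C + |ν|)) ENNReal.ofReal_ne_top
          fun y => posE_neg_fstar_le hf ?_
        calc |g y - ν| ≤ |g y| + |ν| := abs_sub _ _
          _ ≤ C + |ν| := by linarith [hgC y]

lemma lambda_le_compProd (hf : IsF1 a b f) {g : Ω × N → ℝ} (hgm : Measurable g) {C : ℝ}
    (hgC : ∀ z, |g z| ≤ C) :
    LambdaF f P (fun x => ∫ y, g (x, y) ∂(K x)) ≤ LambdaF f (P.compProd K) g := by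
  refine iInf_mono fun ν => add_le_add le_rfl ?_
  have hmeas : Measurable fun z : Ω × N => fstar f (g z - ν) :=
    (fstar_measurable hf).comp (hgm.sub measurable_const)
  calc eIntegral P (fun x => fstar f ((∫ y, g (x, y) ∂(K x)) - ν))
      ≤ eIntegral P (fun x => eIntegral (K x) (fun y => fstar f (g (x, y) - ν))) := by
        refine eIntegral_mono P fun x => ?_
        have hgmx : Measurable fun y => g (x, y) := hgm.comp measurable_prodMk_left
        have hint : Integrable (fun y => g (x, y) - ν) (K x) :=
          (integrable_of_bdd hgmx fun y => hgC _).sub (integrable_const ν)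
        have : (∫ y, g (x, y) ∂(K x)) - ν = ∫ y, (g (x, y) - ν) ∂(K x) := by
          rw [integral_sub (integrable_of_bdd hgmx fun y => hgC _) (integrable_const ν),
            integral_const]
          simp
        rw [this]
        exact jensen hf (K x) hint
    _ ≤ eIntegral (P.compProd K) (fun z => fstar f (g z - ν)) := by
        refine eIntegral_compProd_ge (h := fun z : Ω × N => fstar f (g z - ν)) hmeas
          (c := ENNReal.ofReal (C + |ν|))
          ENNReal.ofReal_ne_top fun z => posE_neg_fstar_le hf ?_
        calc |g z - ν| ≤ |g z| + |ν| := abs_sub _ _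
          _ ≤ C + |ν| := by linarith [hgC z]

lemma bind_eq_snd : Q.bind (fun x => K x) = (Q.compProd K).snd := by
  ext s hs
  rw [Measure.bind_apply hs K.measurable.aemeasurable, Measure.snd_apply hs,
    Measure.compProd_apply (measurable_snd hs)]
  rfl

lemma integral_bind_bdd {g : N → ℝ} (hgm : Measurable g) {C : ℝ} (hgC : ∀ y, |g y| ≤ C) :
    ∫ y, g y ∂(Q.bind (fun x => K x)) = ∫ x, ∫ y, g y ∂(K x) ∂Q := by
  rw [bind_eq_snd, Measure.snd,
    integral_map measurable_snd.aemeasurable hgm.aestronglyMeasurable]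
  exact Measure.integral_compProd
    (integrable_of_bdd (μ := Q.compProd K) (hgm.comp measurable_snd) fun z => hgC _)

end Kern2

end Helpers

/-- (Data processing inequality.) For `f ∈ F₁(a,b)`, probability
measures `Q, P` on `Ω` and a Markov kernel `K` from `Ω` to `N`:
(1) for nonempty `Γ ⊆ M_b(N)`, `D_f^Γ(K[Q]‖K[P]) ≤ D_f^{K[Γ]}(Q‖P)`;
(2) for nonempty `Γ ⊆ M_b(Ω × N)`, `D_f^Γ(Q⊗K‖P⊗K) ≤ D_f^{K[Γ]}(Q‖P)`. -/
theorem stmt15 {Ω N : Type*} [MeasurableSpace Ω] [MeasurableSpace N]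
    (a b : EReal) (f : ℝ → EReal) (hf : IsF1 a b f)
    (Q P : Measure Ω) [IsProbabilityMeasure Q] [IsProbabilityMeasure P]
    (K : ProbabilityTheory.Kernel Ω N) [ProbabilityTheory.IsMarkovKernel K] :
    (∀ Γ : Set (N → ℝ), Γ ⊆ Mb N → Γ.Nonempty →
      fGammaDiv f Γ (Q.bind (fun x => K x)) (P.bind (fun x => K x))
        ≤ fGammaDiv f ((fun (g : N → ℝ) => fun x => ∫ y, g y ∂(K x)) '' Γ) Q P)
    ∧ (∀ Γ : Set (Ω × N → ℝ), Γ ⊆ Mb (Ω × N) → Γ.Nonempty →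
      fGammaDiv f Γ (Q.compProd K) (P.compProd K)
        ≤ fGammaDiv f ((fun (g : Ω × N → ℝ) => fun x => ∫ y, g (x, y) ∂(K x)) '' Γ) Q P) := by
  constructor
  · intro Γ hΓ _
    refine iSup₂_le fun g hg => ?_
    obtain ⟨hgm, C, hgC⟩ := hΓ hg
    have hmem : (fun x => ∫ y, g y ∂(K x)) ∈
        (fun (g : N → ℝ) => fun x => ∫ y, g y ∂(K x)) '' Γ := ⟨g, hg, rfl⟩
    refine le_trans ?_ (le_biSup _ hmem)
    refine EReal.sub_le_sub (le_of_eq ?_) (lambda_le_bind hf hgm hgC)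
    exact congrArg _ (integral_bind_bdd hgm hgC)
  · intro Γ hΓ _
    refine iSup₂_le fun g hg => ?_
    obtain ⟨hgm, C, hgC⟩ := hΓ hg
    have hmem : (fun x => ∫ y, g (x, y) ∂(K x)) ∈
        (fun (g : Ω × N → ℝ) => fun x => ∫ y, g (x, y) ∂(K x)) '' Γ := ⟨g, hg, rfl⟩
    refine le_trans ?_ (le_biSup _ hmem)
    refine EReal.sub_le_sub (le_of_eq ?_) (lambda_le_compProd hf hgm hgC)
    refine congrArg _ (Measure.integral_compProd ?_)
    exact integrable_of_bdd hgm hgC
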